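/- An LFSA S is strongly current-state opaque with respect to Q_S if and only if every state (q, x) reachable in the concurrent composition CC(S_ε, S_dss_obs^ε) with q ∈ Q_S satisfies x ≠ ∅. -/

import Mathlib

/-- A labeled finite-state automaton (LFSA): transition relation `δ`,
initial states `Q0`, labeling `lab` (where `none` stands for ε, i.e. unobservable). -/
structure LFSA (Q : Type*) (E : Type*) (A : Type*) where
  δ : Q → E → Q → Prop
  Q0 : Set Q
  lab : E → Option A

namespace LFSA

variable {Q Q1 Q2 E A : Type*}

/-- A run `q →s q'` over a finite event sequence. -/
inductive Run (S : LFSA Q E A) : Q → List E → Q → Prop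
  | nil (q : Q) : Run S q [] q
  | cons {q q' q'' : Q} {e : E} {s : List E} :
      S.δ q e q' → Run S q' s q'' → Run S q (e :: s) q''

/-- Output (label sequence) of an event sequence. -/
def out (S : LFSA Q E A) (s : List E) : List A := s.filterMap S.lab

/-- Generated finite language. -/
def L (S : LFSA Q E A) : Set (List E) := {s | ∃ q0 ∈ S.Q0, ∃ q, S.Run q0 s q}

/-- Current-state estimate after observing `σ`. -/
def M (S : LFSA Q E A) (σ : List A) : Set Q :=
  {q | ∃ q0 ∈ S.Q0, ∃ s : List E, S.out s = σ ∧ S.Run q0 s q}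

/-- Reachability via a nonempty event sequence. -/
def ReachPlus (S : LFSA Q E A) (q q' : Q) : Prop := ∃ s : List E, s ≠ [] ∧ S.Run q s q'

/-- There is a transition cycle reachable from `q` (a cycle at `q` itself counts). -/
def CycleReachableFrom (S : LFSA Q E A) (q : Q) : Prop :=
  ∃ p : Q, (p = q ∨ S.ReachPlus q p) ∧ ∃ s : List E, s ≠ [] ∧ S.Run p s p

/-- `*`-strong detectability. -/
def StarSD (S : LFSA Q E A) : Prop :=
  ∃ k : ℕ, 0 < k ∧ ∀ s ∈ S.L, ∀ σ : List A, σ <+: S.out s → k < σ.length →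
    ∃ q : Q, S.M σ = {q}

/-- ω-strong detectability. -/
def OmegaSD (S : LFSA Q E A) : Prop :=
  ∃ k : ℕ, 0 < k ∧ ∀ (s : ℕ → E) (ρ : ℕ → Q), ρ 0 ∈ S.Q0 →
    (∀ n : ℕ, S.δ (ρ n) (s n) (ρ (n + 1))) →
    ∀ (n : ℕ) (σ : List A), σ <+: S.out (List.ofFn (fun i : Fin n => s i)) →
      k < σ.length → ∃ q : Q, S.M σ = {q}

/-- Concurrent composition: observable transitions with equal labels synchronize,
unobservable transitions interleave. Events are pairs over `Option E` (`none` = ε). -/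
def CC (S1 : LFSA Q1 E A) (S2 : LFSA Q2 E A) :
    LFSA (Q1 × Q2) (Option E × Option E) A where
  δ p ev p' :=
    match ev with
    | (some e, some e') =>
        (∃ a : A, S1.lab e = some a ∧ S2.lab e' = some a) ∧
          S1.δ p.1 e p'.1 ∧ S2.δ p.2 e' p'.2
    | (some e, none) => S1.lab e = none ∧ S1.δ p.1 e p'.1 ∧ p.2 = p'.2
    | (none, some e') => S2.lab e' = none ∧ p.1 = p'.1 ∧ S2.δ p.2 e' p'.2
    | (none, none) => False
  Q0 := {p | p.1 ∈ S1.Q0 ∧ p.2 ∈ S2.Q0}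
  lab ev := ev.1.bind S1.lab

/-- Left projection of an event sequence of a concurrent composition. -/
def lproj (s : List (Option E × Option E)) : List E := s.filterMap Prod.fst

/-- Right projection of an event sequence of a concurrent composition. -/
def rproj (s : List (Option E × Option E)) : List E := s.filterMap Prod.snd

/-- Unobservable reach of a set of states. -/
def UR (S : LFSA Q E A) (X : Set Q) : Set Q :=
  {q | ∃ q0 ∈ X, ∃ s : List E, S.out s = [] ∧ S.Run q0 s q}

/-- One step of the observer (powerset construction). -/
def obsStep (S : LFSA Q E A) (x : Set Q) (a : A) : Set Q :=
  {q' | ∃ q ∈ x, ∃ (e : E) (p : Q), S.lab e = some a ∧ S.δ q e p ∧ q' ∈ S.UR {p}}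

/-- Observer run (deterministic). -/
def obsRun (S : LFSA Q E A) (x : Set Q) (σ : List A) : Set Q := σ.foldl S.obsStep x

/-- The concurrent composition `CC(S_ε, Obs^ε)` of `S` (with events relabeled by their
labels) and a deterministic observer with step function `ostep` and initial state `x0`:
observable transitions move both components, unobservable ones move only the left one. -/
def CCObs (S : LFSA Q E A) (ostep : Set Q → A → Set Q) (x0 : Set Q) :
    LFSA (Q × Set Q) E A where
  δ p e p' := S.δ p.1 e p'.1 ∧
    (∀ a : A, S.lab e = some a → p'.2 = ostep p.2 a) ∧
    (S.lab e = none → p'.2 = p.2)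
  Q0 := {p | p.1 ∈ S.Q0 ∧ p.2 = x0}
  lab := S.lab

/-- A state is reachable if it is an initial state or reachable from one. -/
def Reachable (S : LFSA Q E A) (q : Q) : Prop := ∃ q0 ∈ S.Q0, ∃ s : List E, S.Run q0 s q

/-- Restriction of an automaton to a set of allowed states. -/
def restrict (S : LFSA Q E A) (P : Set Q) : LFSA Q E A where
  δ q e q' := S.δ q e q' ∧ q ∈ P ∧ q' ∈ P
  Q0 := S.Q0 ∩ P
  lab := S.lab

/-- A run all of whose states (including endpoints) lie in `P`. -/
inductive RunIn (S : LFSA Q E A) (P : Set Q) : Q → List E → Q → Prop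
  | nil (q : Q) : q ∈ P → RunIn S P q [] q
  | cons {q q' q'' : Q} {e : E} {s : List E} :
      q ∈ P → S.δ q e q' → RunIn S P q' s q'' → RunIn S P q (e :: s) q''

/-- Normal subautomaton: all faulty transitions removed. -/
def Sn (S : LFSA Q E A) (Ef : Set E) : LFSA Q E A where
  δ q e q' := S.δ q e q' ∧ e ∉ Ef
  Q0 := S.Q0
  lab := S.lab

/-- Faulty subautomaton: faulty transitions together with all their
predecessor and successor transitions. -/
def Sf (S : LFSA Q E A) (Ef : Set E) : LFSA Q E A where
  δ q e q' := S.δ q e q' ∧ ∃ c f d, f ∈ Ef ∧ S.δ c f d ∧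
      ((q = c ∧ e = f ∧ q' = d) ∨ (c = q' ∨ S.ReachPlus q' c) ∨ (q = d ∨ S.ReachPlus d q))
  Q0 := S.Q0
  lab := S.lab

/-- `s` ends with a faulty event. -/
def EndsFaulty (Ef : Set E) (s : List E) : Prop := ∃ (t : List E) (e : E), e ∈ Ef ∧ s = t ++ [e]

/-- `E_f`-diagnosability. -/
def Diag (S : LFSA Q E A) (Ef : Set E) : Prop :=
  ∃ k : ℕ, ∀ s ∈ S.L, EndsFaulty Ef s → ∀ s' : List E, s ++ s' ∈ S.L → k < s'.length →
    ∀ s'' ∈ S.L, S.out s'' = S.out (s ++ s') → ∃ e ∈ Ef, e ∈ s''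

/-- `E_f`-predictability. -/
def Pred (S : LFSA Q E A) (Ef : Set E) : Prop :=
  ∃ k : ℕ, ∀ s ∈ S.L, EndsFaulty Ef s →
    ∃ s' : List E, s' <+: s ∧ (∀ e ∈ s', e ∉ Ef) ∧
      ∀ u v : List E, u ++ v ∈ S.L → S.out s' = S.out u → (∀ e ∈ u, e ∉ Ef) →
        k < v.length → ∃ e ∈ Ef, e ∈ v

/-- Current-state opacity. -/
def CSO (S : LFSA Q E A) (QS : Set Q) : Prop :=
  ∀ q0 ∈ S.Q0, ∀ (s : List E) (q : Q), S.Run q0 s q → q ∈ QS →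
    ∃ q0' ∈ S.Q0, ∃ (s' : List E) (q' : Q), S.Run q0' s' q' ∧ q' ∉ QS ∧ S.out s = S.out s'

/-- Initial-state opacity. -/
def ISO (S : LFSA Q E A) (QS : Set Q) : Prop :=
  ∀ q0 ∈ S.Q0 ∩ QS, ∀ (s : List E) (q : Q), S.Run q0 s q →
    ∃ q0' ∈ S.Q0 \ QS, ∃ (s' : List E) (q' : Q), S.Run q0' s' q' ∧ S.out s = S.out s'

/-- Infinite-step opacity. -/
def InfSO (S : LFSA Q E A) (QS : Set Q) : Prop :=
  ∀ q0 ∈ S.Q0, ∀ (s1 : List E) (q1 : Q) (s2 : List E) (q2 : Q),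
    S.Run q0 s1 q1 → S.Run q1 s2 q2 → q1 ∈ QS →
    ∃ q0' ∈ S.Q0, ∃ (s1' : List E) (q1' : Q) (s2' : List E) (q2' : Q),
      S.Run q0' s1' q1' ∧ S.Run q1' s2' q2' ∧ q1' ∉ QS ∧
        S.out s1 = S.out s1' ∧ S.out s2 = S.out s2'

/-- `K`-step opacity. -/
def KSO (S : LFSA Q E A) (QS : Set Q) (K : ℕ) : Prop :=
  ∀ q0 ∈ S.Q0, ∀ (s1 : List E) (q1 : Q) (s2 : List E) (q2 : Q),
    S.Run q0 s1 q1 → S.Run q1 s2 q2 → q1 ∈ QS → (S.out s2).length ≤ K →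
    ∃ q0' ∈ S.Q0, ∃ (s1' : List E) (q1' : Q) (s2' : List E) (q2' : Q),
      S.Run q0' s1' q1' ∧ S.Run q1' s2' q2' ∧ q1' ∉ QS ∧
        S.out s1 = S.out s1' ∧ S.out s2 = S.out s2'

/-- Strong current-state opacity: the matching run is entirely non-secret. -/
def SCSO (S : LFSA Q E A) (QS : Set Q) : Prop :=
  ∀ q0 ∈ S.Q0, ∀ (s : List E) (q : Q), S.Run q0 s q → q ∈ QS →
    ∃ q0' ∈ S.Q0, ∃ (s' : List E) (q' : Q), S.RunIn QSᶜ q0' s' q' ∧ S.out s = S.out s'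

/-- Strong initial-state opacity. -/
def SISO (S : LFSA Q E A) (QS : Set Q) : Prop :=
  ∀ q0 ∈ S.Q0 ∩ QS, ∀ (s : List E) (q : Q), S.Run q0 s q →
    ∃ q0' ∈ S.Q0 \ QS, ∃ (s' : List E) (q' : Q), S.RunIn QSᶜ q0' s' q' ∧ S.out s = S.out s'

/-- Strong infinite-step opacity. -/
def SInfSO (S : LFSA Q E A) (QS : Set Q) : Prop :=
  ∀ q0 ∈ S.Q0, ∀ (s1 : List E) (q1 : Q) (s2 : List E) (q2 : Q),
    S.Run q0 s1 q1 → S.Run q1 s2 q2 → q1 ∈ QS →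
    ∃ q0' ∈ S.Q0, ∃ (s1' : List E) (q1' : Q) (s2' : List E) (q2' : Q),
      S.RunIn QSᶜ q0' s1' q1' ∧ S.RunIn QSᶜ q1' s2' q2' ∧
        S.out s1 = S.out s1' ∧ S.out s2 = S.out s2'

/-- Strong `K`-step opacity. -/
def SKSO (S : LFSA Q E A) (QS : Set Q) (K : ℕ) : Prop :=
  ∀ q0 ∈ S.Q0, ∀ (s1 : List E) (q1 : Q) (s2 : List E) (q2 : Q),
    S.Run q0 s1 q1 → S.Run q1 s2 q2 → q1 ∈ QS → (S.out s2).length ≤ K →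
    ∃ q0' ∈ S.Q0, ∃ (s1' : List E) (q1' : Q) (s2' : List E) (q2' : Q),
      S.RunIn QSᶜ q0' s1' q1' ∧ S.RunIn QSᶜ q1' s2' q2' ∧
        S.out s1 = S.out s1' ∧ S.out s2 = S.out s2'

/-- Observer step of the secret-deleted subautomaton `S_dss`. -/
def dssObsStep (S : LFSA Q E A) (QS : Set Q) : Set Q → A → Set Q :=
  (S.restrict QSᶜ).obsStep

/-- Initial observer state of the secret-deleted subautomaton. -/
def dssInit (S : LFSA Q E A) (QS : Set Q) : Set Q :=
  (S.restrict QSᶜ).UR (S.restrict QSᶜ).Q0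

end LFSA

namespace LFSA

variable {Q E A : Type*}

lemma Run.append {S : LFSA Q E A} {q q' q'' : Q} {s t : List E}
    (h1 : S.Run q s q') (h2 : S.Run q' t q'') : S.Run q (s ++ t) q'' := by
  induction h1 with
  | nil q => exact h2
  | cons hδ _ ih => exact Run.cons hδ (ih h2)

lemma out_append (S : LFSA Q E A) (s t : List E) :
    S.out (s ++ t) = S.out s ++ S.out t := List.filterMap_append

lemma runIn_start {S : LFSA Q E A} {P : Set Q} {q q' : Q} {s : List E}
    (h : S.RunIn P q s q') : q ∈ P := by cases h with
  | nil _ h => exact h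
  | cons h _ _ => exact h

lemma runIn_restrict {S : LFSA Q E A} {P : Set Q} {q q' : Q} {s : List E}
    (h : S.RunIn P q s q') : (S.restrict P).Run q s q' := by
  induction h with
  | nil q _ => exact Run.nil q
  | cons hq hδ hrun ih => exact Run.cons ⟨hδ, hq, runIn_start hrun⟩ ih

lemma restrict_runIn {S : LFSA Q E A} {P : Set Q} {q q' : Q} {s : List E}
    (h : (S.restrict P).Run q s q') (hq : q ∈ P) : S.RunIn P q s q' := by
  induction h with
  | nil q => exact RunIn.nil q hq
  | cons hδ _ ih => exact RunIn.cons hq hδ.1 (ih hδ.2.2)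

/-- split a run whose output starts with `a`. -/
lemma run_out_cons {S : LFSA Q E A} {s : List E} {q0 qf : Q} {a : A} {σ : List A}
    (h : S.Run q0 s qf) : S.out s = a :: σ →
    ∃ u q1 e p v, S.out u = [] ∧ S.Run q0 u q1 ∧ S.lab e = some a ∧ S.δ q1 e p ∧
      S.out v = σ ∧ S.Run p v qf := by
  induction h with
  | nil q => intro h; simp [out] at h
  | @cons q q' q'' e s hδ hrun ih =>
    intro hout
    cases hl : S.lab e with
    | some b =>
      simp [out, List.filterMap_cons, hl] at hout
      obtain ⟨hb, hs⟩ := hout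
      exact ⟨[], q, e, q', s, rfl, Run.nil q, by rw [hl, hb], hδ, hs, hrun⟩
    | none =>
      simp [out, List.filterMap_cons, hl] at hout
      obtain ⟨u, q1, e', p, v, hu, hru, hle, hδ', hv, hrv⟩ := ih hout
      exact ⟨e :: u, q1, e', p, v, by simp [out, List.filterMap_cons, hl] at hu ⊢; exact hu,
        Run.cons hδ hru, hle, hδ', hv, hrv⟩

/-- Observer correctness. -/
lemma mem_obsRun_UR (S : LFSA Q E A) :
    ∀ (σ : List A) (X : Set Q) (qf : Q),
      qf ∈ S.obsRun (S.UR X) σ ↔ ∃ q0 ∈ X, ∃ s, S.out s = σ ∧ S.Run q0 s qf := by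
  intro σ
  induction σ with
  | nil =>
    intro X qf
    simp only [obsRun, List.foldl_nil]
    exact Iff.rfl
  | cons a σ ih =>
    intro X qf
    have hstep : S.obsStep (S.UR X) a =
        S.UR {p | ∃ q1 ∈ S.UR X, ∃ e, S.lab e = some a ∧ S.δ q1 e p} := by
      ext q'
      constructor
      · rintro ⟨q1, hq1, e, p, hle, hδ, p0, hp0, w, hw, hrw⟩
        rcases hp0 with rfl
        exact ⟨_, ⟨q1, hq1, e, hle, hδ⟩, w, hw, hrw⟩
      · rintro ⟨p, ⟨q1, hq1, e, hle, hδ⟩, w, hw, hrw⟩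
        exact ⟨q1, hq1, e, p, hle, hδ, p, rfl, w, hw, hrw⟩
    show qf ∈ S.obsRun (S.obsStep (S.UR X) a) σ ↔ _
    rw [hstep, ih]
    constructor
    · rintro ⟨p, ⟨q1, ⟨q0, hq0, u, hu, hru⟩, e, hle, hδ⟩, v, hv, hrv⟩
      refine ⟨q0, hq0, u ++ e :: v, ?_, hru.append (Run.cons hδ hrv)⟩
      simp only [out] at hu hv ⊢
      rw [List.filterMap_append, hu, List.filterMap_cons, hle, hv]
      rfl
    · rintro ⟨q0, hq0, s, hs, hrs⟩
      obtain ⟨u, q1, e, p, v, hu, hru, hle, hδ, hv, hrv⟩ := run_out_cons hrs hs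
      exact ⟨p, ⟨q1, ⟨q0, hq0, u, hu, hru⟩, e, hle, hδ⟩, v, hv, hrv⟩

/-- Projection of a run of `CCObs`. -/
lemma ccobs_run {S : LFSA Q E A} {ostep : Set Q → A → Set Q} {x0 : Set Q}
    {p p' : Q × Set Q} {s : List E} (h : (S.CCObs ostep x0).Run p s p') :
    S.Run p.1 s p'.1 ∧ p'.2 = (S.out s).foldl ostep p.2 := by
  induction h with
  | nil q => exact ⟨Run.nil q.1, by simp [out]⟩
  | @cons p q' q'' e s hδ hrun ih =>
    obtain ⟨h1, h2, h3⟩ := hδ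
    cases hl : S.lab e with
    | some a =>
      refine ⟨Run.cons h1 ih.1, ?_⟩
      rw [ih.2, h2 a hl]
      simp [out, List.filterMap_cons, hl]
    | none =>
      refine ⟨Run.cons h1 ih.1, ?_⟩
      rw [ih.2, h3 hl]
      simp [out, List.filterMap_cons, hl]

/-- Lifting a run of `S` to `CCObs`. -/
lemma ccobs_lift {S : LFSA Q E A} (ostep : Set Q → A → Set Q) (x0 : Set Q)
    {q0 qf : Q} {s : List E} (h : S.Run q0 s qf) :
    ∀ x : Set Q, (S.CCObs ostep x0).Run (q0, x) s (qf, (S.out s).foldl ostep x) := by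
  induction h with
  | nil q =>
    intro x
    simpa [out] using Run.nil (S := S.CCObs ostep x0) (q, x)
  | @cons q q' q'' e s hδ hrun ih =>
    intro x
    cases hl : S.lab e with
    | some a =>
      have hstep : (S.CCObs ostep x0).δ (q, x) e (q', ostep x a) := by
        refine ⟨hδ, ?_, ?_⟩
        · intro b hb; rw [hl] at hb; cases hb; rfl
        · intro hb; rw [hl] at hb; cases hb
      have := Run.cons hstep (ih (ostep x a))
      simpa [out, List.filterMap_cons, hl] using this
    | none =>
      have hstep : (S.CCObs ostep x0).δ (q, x) e (q', x) := by
        refine ⟨hδ, ?_, fun _ => rfl⟩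
        intro b hb; rw [hl] at hb; cases hb
      have := Run.cons hstep (ih x)
      simpa [out, List.filterMap_cons, hl] using this

end LFSA

/-- concurrent-composition characterization of strong
current-state opacity. -/
theorem stmt14 {Q E A : Type*} (S : LFSA Q E A) (QS : Set Q) :
    S.SCSO QS ↔
      ∀ p : Q × Set Q,
        (S.CCObs (S.dssObsStep QS) (S.dssInit QS)).Reachable p →
          p.1 ∈ QS → p.2.Nonempty := by
  set T := S.restrict QSᶜ with hT
  constructor
  · intro hS p hreach hQS
    obtain ⟨p0, ⟨hQ0, hx0⟩, s, hrun⟩ := hreach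
    obtain ⟨h1, h2⟩ := LFSA.ccobs_run hrun
    obtain ⟨q0', hq0', s', q', hrun', hout⟩ := hS p0.1 hQ0 s p.1 h1 hQS
    have hq0c : q0' ∈ QSᶜ := LFSA.runIn_start hrun'
    have hmem : q' ∈ T.obsRun (T.UR T.Q0) (S.out s) := by
      rw [LFSA.mem_obsRun_UR]
      exact ⟨q0', ⟨hq0', hq0c⟩, s', hout.symm, LFSA.runIn_restrict hrun'⟩
    refine ⟨q', ?_⟩
    rw [h2, hx0]
    exact hmem
  · intro h q0 hq0 s q hrun hQS
    have hcc := LFSA.ccobs_lift (S.dssObsStep QS) (S.dssInit QS) hrun (S.dssInit QS)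
    obtain ⟨q', hq'⟩ :=
      h (q, (S.out s).foldl (S.dssObsStep QS) (S.dssInit QS))
        ⟨(q0, S.dssInit QS), ⟨hq0, rfl⟩, s, hcc⟩ hQS
    have hq'' : q' ∈ T.obsRun (T.UR T.Q0) (S.out s) := hq'
    rw [LFSA.mem_obsRun_UR] at hq''
    obtain ⟨q0', hq0', s', hs', hrs'⟩ := hq''
    exact ⟨q0', hq0'.1, s', q', LFSA.restrict_runIn hrs' hq0'.2, hs'.symm⟩
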